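/- With notation as in the deformation of a comodule algebra: if a ∈ M₀, ξ ∈ H, and V, ad_V, σ, ρ_σ are as given, then the twisted coaction is covariant: V(ρ_σ(a)ξ) = a₍₀₎ξ₍₀₎ σ⁻¹(a₍₁₎₍₂₎, ξ₍₁₎₍₂₎) ⊗ a₍₁₎₍₁₎ ξ₍₁₎₍₁₎, and this equals (ρ_σ ⊗ ·_σ)(ad_V ⊗ V-structure) applied to (a, ξ); i.e. ad_{V_σ}(ρ_σ(a)) ∘ V_σ = V_σ ∘ ρ_σ(a) where V_σ = V as a linear map and the Q₀-factor carries the σ-twisted product. -/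

import Mathlib

open TensorProduct

noncomputable section

namespace CocycleTwist

variable (A : Type) [Ring A] [HopfAlgebra ℂ A]

/-- Convolution product of two linear maps from a coalgebra into an algebra. -/
def conv {C B : Type} [AddCommGroup C] [Module ℂ C] [Coalgebra ℂ C]
    [Ring B] [Algebra ℂ B] (f g : C →ₗ[ℂ] B) : C →ₗ[ℂ] B :=
  LinearMap.mul' ℂ B ∘ₗ TensorProduct.map f g ∘ₗ Coalgebra.comul

/-- A scalar-valued functional viewed as a map into `A`. -/
def toA {C : Type} [AddCommGroup C] [Module ℂ C] (f : C →ₗ[ℂ] ℂ) : C →ₗ[ℂ] A :=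
  Algebra.linearMap ℂ A ∘ₗ f

/-- The twisted multiplication `a ·_σ b = τ(a₁,b₁) (a₂ ⋅ b₂) τ'(a₃,b₃)` associated with a pair of
functionals `τ, τ'` on `A ⊗ A` and a multiplication map `m`. -/
def mulTwOf (m : A ⊗[ℂ] A →ₗ[ℂ] A) (τ τ' : A ⊗[ℂ] A →ₗ[ℂ] ℂ) : A ⊗[ℂ] A →ₗ[ℂ] A :=
  conv (toA A τ) (conv m (toA A τ'))

/-- Left-hand side of the 2-cocycle identity: `σ(b₁,c₁) σ(a, b₂c₂)` as a functional on
`A ⊗ (A ⊗ A)`. -/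
def cocycleL (σ : A ⊗[ℂ] A →ₗ[ℂ] ℂ) : A ⊗[ℂ] (A ⊗[ℂ] A) →ₗ[ℂ] ℂ :=
  conv (LinearMap.mul' ℂ ℂ ∘ₗ TensorProduct.map Coalgebra.counit σ)
    (σ ∘ₗ TensorProduct.map LinearMap.id (LinearMap.mul' ℂ A))

/-- Right-hand side of the 2-cocycle identity: `σ(a₁,b₁) σ(a₂b₂, c)` as a functional on
`A ⊗ (A ⊗ A)`. -/
def cocycleR (σ : A ⊗[ℂ] A →ₗ[ℂ] ℂ) : A ⊗[ℂ] (A ⊗[ℂ] A) →ₗ[ℂ] ℂ :=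
  conv
    (LinearMap.mul' ℂ ℂ ∘ₗ TensorProduct.map σ Coalgebra.counit ∘ₗ
      (TensorProduct.assoc ℂ A A A).symm.toLinearMap)
    (σ ∘ₗ TensorProduct.map (LinearMap.mul' ℂ A) LinearMap.id ∘ₗ
      (TensorProduct.assoc ℂ A A A).symm.toLinearMap)

/-- The 2-cocycle identity `σ(b₁,c₁) σ(a, b₂c₂) = σ(a₁,b₁) σ(a₂b₂, c)`. -/
def IsCocycle (σ : A ⊗[ℂ] A →ₗ[ℂ] ℂ) : Prop := cocycleL A σ = cocycleR A σ

/-- Normalization: `σ(a,1) = σ(1,a) = ε(a)`. -/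
def IsNormalized (σ : A ⊗[ℂ] A →ₗ[ℂ] ℂ) : Prop :=
  ∀ a : A, σ (a ⊗ₜ (1 : A)) = Coalgebra.counit a ∧ σ ((1 : A) ⊗ₜ a) = Coalgebra.counit a

/-- `σ` and `σinv` are convolution inverses of each other (the convolution unit on functionals on
the coalgebra `A ⊗ A` is its counit). -/
def AreConvInverse (σ σinv : A ⊗[ℂ] A →ₗ[ℂ] ℂ) : Prop :=
  conv σ σinv = (Coalgebra.counit : A ⊗[ℂ] A →ₗ[ℂ] ℂ) ∧
    conv σinv σ = (Coalgebra.counit : A ⊗[ℂ] A →ₗ[ℂ] ℂ)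

variable (H M : Type) [AddCommGroup H] [Module ℂ H] [Ring M] [Algebra ℂ M]

/-- The bilinear action `M ⊗ H → H` induced by an algebra representation `θ`. -/
def actB (θ : M →ₐ[ℂ] Module.End ℂ H) : M ⊗[ℂ] H →ₗ[ℂ] H :=
  TensorProduct.lift (θ.toLinearMap : M →ₗ[ℂ] (H →ₗ[ℂ] H))

/-- Combination map `(a ⊗ q) ⊗ (ξ ⊗ r) ↦ (a ξ) ⊗ (q r)`. -/
def comb (θ : M →ₐ[ℂ] Module.End ℂ H) : (M ⊗[ℂ] A) ⊗[ℂ] (H ⊗[ℂ] A) →ₗ[ℂ] H ⊗[ℂ] A :=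
  TensorProduct.map (actB H M θ) (LinearMap.mul' ℂ A) ∘ₗ
    (TensorProduct.tensorTensorTensorComm ℂ M A H A).toLinearMap

/-- Combination map `(a ⊗ q) ⊗ (ξ ⊗ r) ↦ σ⁻¹(q, r) • (a ξ)`. -/
def combσ (θ : M →ₐ[ℂ] Module.End ℂ H) (σinv : A ⊗[ℂ] A →ₗ[ℂ] ℂ) :
    (M ⊗[ℂ] A) ⊗[ℂ] (H ⊗[ℂ] A) →ₗ[ℂ] H :=
  (TensorProduct.rid ℂ H).toLinearMap ∘ₗ
    TensorProduct.map (actB H M θ) σinv ∘ₗ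
    (TensorProduct.tensorTensorTensorComm ℂ M A H A).toLinearMap

/-- `ρ_σ` as a bilinear map: `a ⊗ ξ ↦ a₍₀₎ ξ₍₀₎ σ⁻¹(a₍₁₎, ξ₍₁₎)`. -/
def rhoBil (V : H →ₗ[ℂ] H ⊗[ℂ] A) (adV : M →ₗ[ℂ] M ⊗[ℂ] A) (θ : M →ₐ[ℂ] Module.End ℂ H)
    (σinv : A ⊗[ℂ] A →ₗ[ℂ] ℂ) : M ⊗[ℂ] H →ₗ[ℂ] H :=
  combσ A H M θ σinv ∘ₗ TensorProduct.map adV V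

/-- The deformed representation `ρ_σ(a) ξ := a₍₀₎ ξ₍₀₎ σ⁻¹(a₍₁₎, ξ₍₁₎)`. -/
def rhoσ (V : H →ₗ[ℂ] H ⊗[ℂ] A) (adV : M →ₗ[ℂ] M ⊗[ℂ] A) (θ : M →ₐ[ℂ] Module.End ℂ H)
    (σinv : A ⊗[ℂ] A →ₗ[ℂ] ℂ) (a : M) : H →ₗ[ℂ] H :=
  rhoBil A H M V adV θ σinv ∘ₗ TensorProduct.mk ℂ M H a

/-- The twice-iterated coaction `a ↦ (a₍₀₎ ⊗ a₍₁₎) ⊗ a₍₂₎`. -/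
def coact₂ {N : Type} [AddCommGroup N] [Module ℂ N] (β : N →ₗ[ℂ] N ⊗[ℂ] A) :
    N →ₗ[ℂ] (N ⊗[ℂ] A) ⊗[ℂ] A :=
  TensorProduct.map β LinearMap.id ∘ₗ β

/-- `(a₀ ⊗ q) ⊗ (b₀ ⊗ r) ↦ σ(q, r) • (a₀ b₀)`. -/
def mulσaux (σ : A ⊗[ℂ] A →ₗ[ℂ] ℂ) : (M ⊗[ℂ] A) ⊗[ℂ] (M ⊗[ℂ] A) →ₗ[ℂ] M :=
  (TensorProduct.rid ℂ M).toLinearMap ∘ₗ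
    TensorProduct.map (LinearMap.mul' ℂ M) σ ∘ₗ
    (TensorProduct.tensorTensorTensorComm ℂ M A M A).toLinearMap

/-- The twisted product on `M₀` induced from the coaction:
`a ·_σ b = σ(a₍₁₎, b₍₁₎) (a₍₀₎ b₍₀₎) σ⁻¹(a₍₂₎, b₍₂₎)`. -/
def mulTwM (adV : M →ₗ[ℂ] M ⊗[ℂ] A) (σ σinv : A ⊗[ℂ] A →ₗ[ℂ] ℂ) (a b : M) : M :=
  ((TensorProduct.rid ℂ M).toLinearMap ∘ₗ
      TensorProduct.map (mulσaux A M σ) σinv ∘ₗ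
      (TensorProduct.tensorTensorTensorComm ℂ (M ⊗[ℂ] A) A (M ⊗[ℂ] A) A).toLinearMap)
    (coact₂ A adV a ⊗ₜ coact₂ A adV b)

section Hypotheses

variable (V : H →ₗ[ℂ] H ⊗[ℂ] A) (adV : M →ₗ[ℂ] M ⊗[ℂ] A) (θ : M →ₐ[ℂ] Module.End ℂ H)

/-- `V` is a counital coassociative coaction. -/
def IsCoaction {N : Type} [AddCommGroup N] [Module ℂ N] (β : N →ₗ[ℂ] N ⊗[ℂ] A) : Prop :=
  (TensorProduct.map LinearMap.id Coalgebra.comul ∘ₗ β =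
    (TensorProduct.assoc ℂ N A A).toLinearMap ∘ₗ TensorProduct.map β LinearMap.id ∘ₗ β) ∧
  ∀ ξ : N, (TensorProduct.rid ℂ N)
      ((TensorProduct.map LinearMap.id (Coalgebra.counit : A →ₗ[ℂ] ℂ)) (β ξ)) = ξ

/-- Compatibility: `V(aξ) = a₍₀₎ ξ₍₀₎ ⊗ a₍₁₎ ξ₍₁₎`. -/
def IsCovariant : Prop :=
  ∀ (a : M) (ξ : H), comb A H M θ (adV a ⊗ₜ V ξ) = V (θ a ξ)

end Hypotheses

/-- `(a₀ ⊗ a₁ ⊗ a₂) ⊗ (ξ₀ ⊗ ξ₁ ⊗ ξ₂) ↦ σ⁻¹(a₂, ξ₂) • (a₀ ξ₀ ⊗ a₁ ξ₁)`. -/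
def Θmap (θ : M →ₐ[ℂ] Module.End ℂ H) (σinv : A ⊗[ℂ] A →ₗ[ℂ] ℂ) :
    ((M ⊗[ℂ] A) ⊗[ℂ] A) ⊗[ℂ] ((H ⊗[ℂ] A) ⊗[ℂ] A) →ₗ[ℂ] H ⊗[ℂ] A :=
  (TensorProduct.rid ℂ (H ⊗[ℂ] A)).toLinearMap ∘ₗ
    TensorProduct.map (comb A H M θ) σinv ∘ₗ
    (TensorProduct.tensorTensorTensorComm ℂ (M ⊗[ℂ] A) A (H ⊗[ℂ] A) A).toLinearMap

/-- `(a₀ ⊗ a₁) ⊗ (ξ₀ ⊗ ξ₁) ↦ ρ_σ(a₀)ξ₀ ⊗ (a₁ ·_σ ξ₁)`, where `·_σ` is the twisted product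
on `A`. -/
def Θ'map (V : H →ₗ[ℂ] H ⊗[ℂ] A) (adV : M →ₗ[ℂ] M ⊗[ℂ] A) (θ : M →ₐ[ℂ] Module.End ℂ H)
    (σ σinv : A ⊗[ℂ] A →ₗ[ℂ] ℂ) :
    (M ⊗[ℂ] A) ⊗[ℂ] (H ⊗[ℂ] A) →ₗ[ℂ] H ⊗[ℂ] A :=
  TensorProduct.map (rhoBil A H M V adV θ σinv) (mulTwOf A (LinearMap.mul' ℂ A) σ σinv) ∘ₗ
    (TensorProduct.tensorTensorTensorComm ℂ M A H A).toLinearMap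

/- ======================= auxiliary lemmas ======================= -/

set_option maxHeartbeats 1000000
set_option synthInstance.maxHeartbeats 400000

section ConvAlg

variable {C B : Type} [AddCommGroup C] [Module ℂ C] [Coalgebra ℂ C] [Ring B] [Algebra ℂ B]

omit [Coalgebra ℂ C] in
lemma mul'_assoc_aux (f g h : C →ₗ[ℂ] B) :
    LinearMap.mul' ℂ B ∘ₗ TensorProduct.map (LinearMap.mul' ℂ B ∘ₗ TensorProduct.map f g) h =
    (LinearMap.mul' ℂ B ∘ₗ TensorProduct.map f (LinearMap.mul' ℂ B ∘ₗ TensorProduct.map g h)) ∘ₗ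
      (TensorProduct.assoc ℂ C C C).toLinearMap := by
  apply TensorProduct.ext_threefold
  intro x y z
  simp [mul_assoc]

lemma conv_assoc (f g h : C →ₗ[ℂ] B) : conv (conv f g) h = conv f (conv g h) := by
  ext c
  simp only [conv, LinearMap.comp_apply]
  have l1 : TensorProduct.map (LinearMap.mul' ℂ B ∘ₗ TensorProduct.map f g ∘ₗ Coalgebra.comul) h
      = TensorProduct.map (LinearMap.mul' ℂ B ∘ₗ TensorProduct.map f g) h ∘ₗ
        LinearMap.rTensor C (Coalgebra.comul) := by
    apply TensorProduct.ext'; intro x y; simp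
  have l2 : TensorProduct.map f (LinearMap.mul' ℂ B ∘ₗ TensorProduct.map g h ∘ₗ Coalgebra.comul)
      = TensorProduct.map f (LinearMap.mul' ℂ B ∘ₗ TensorProduct.map g h) ∘ₗ
        LinearMap.lTensor C (Coalgebra.comul) := by
    apply TensorProduct.ext'; intro x y; simp
  rw [l1, l2, LinearMap.comp_apply, LinearMap.comp_apply, ← Coalgebra.coassoc_apply c]
  exact LinearMap.congr_fun (mul'_assoc_aux f g h)
    ((LinearMap.rTensor C Coalgebra.comul) (Coalgebra.comul c))

lemma conv_one_left (f : C →ₗ[ℂ] B) :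
    conv (Algebra.linearMap ℂ B ∘ₗ Coalgebra.counit) f = f := by
  ext c
  simp only [conv, LinearMap.comp_apply]
  have l1 : TensorProduct.map (Algebra.linearMap ℂ B ∘ₗ Coalgebra.counit) f
      = TensorProduct.map (Algebra.linearMap ℂ B) f ∘ₗ
        LinearMap.rTensor C (Coalgebra.counit (R := ℂ) (A := C)) := by
    apply TensorProduct.ext'; intro x y; simp
  rw [l1]; simp only [LinearMap.comp_apply]; rw [Coalgebra.rTensor_counit_comul]
  simp

lemma toA_conv (f g : C →ₗ[ℂ] ℂ) : conv (toA A f) (toA A g) = toA A (conv f g) := by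
  have l0 : LinearMap.mul' ℂ A ∘ₗ
      TensorProduct.map (Algebra.linearMap ℂ A) (Algebra.linearMap ℂ A) =
      Algebra.linearMap ℂ A ∘ₗ LinearMap.mul' ℂ ℂ := by
    apply TensorProduct.ext'; intro x y; simp
  ext c
  simp only [conv, toA, LinearMap.comp_apply]
  rw [show TensorProduct.map (Algebra.linearMap ℂ A ∘ₗ f) (Algebra.linearMap ℂ A ∘ₗ g)
      = TensorProduct.map (Algebra.linearMap ℂ A) (Algebra.linearMap ℂ A) ∘ₗ
        TensorProduct.map f g from (TensorProduct.map_comp _ _ _ _)]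
  rw [LinearMap.comp_apply, ← LinearMap.comp_apply (LinearMap.mul' ℂ A), l0]
  simp

end ConvAlg

section MapHelpers

variable {X₁ Y₁ Z₁ W₁ X₂ Y₂ Z₂ W₂ : Type}
  [AddCommGroup X₁] [Module ℂ X₁] [AddCommGroup Y₁] [Module ℂ Y₁]
  [AddCommGroup Z₁] [Module ℂ Z₁] [AddCommGroup W₁] [Module ℂ W₁]
  [AddCommGroup X₂] [Module ℂ X₂] [AddCommGroup Y₂] [Module ℂ Y₂]
  [AddCommGroup Z₂] [Module ℂ Z₂] [AddCommGroup W₂] [Module ℂ W₂]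

lemma ttt_nat (f : X₁ →ₗ[ℂ] X₂) (g : Y₁ →ₗ[ℂ] Y₂) (h : Z₁ →ₗ[ℂ] Z₂) (k : W₁ →ₗ[ℂ] W₂) :
    TensorProduct.map (TensorProduct.map f h) (TensorProduct.map g k) ∘ₗ
      (tensorTensorTensorComm ℂ X₁ Y₁ Z₁ W₁).toLinearMap =
    (tensorTensorTensorComm ℂ X₂ Y₂ Z₂ W₂).toLinearMap ∘ₗ
      TensorProduct.map (TensorProduct.map f g) (TensorProduct.map h k) := by
  apply TensorProduct.ext_fourfold'
  intro x y z w
  simp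

omit [AddCommGroup Z₁] [Module ℂ Z₁] [AddCommGroup W₁] [Module ℂ W₁]
  [AddCommGroup X₂] [Module ℂ X₂] [AddCommGroup Y₂] [Module ℂ Y₂]
  [AddCommGroup Z₂] [Module ℂ Z₂] [AddCommGroup W₂] [Module ℂ W₂] in
lemma rid_nat (u : X₁ →ₗ[ℂ] Y₁) :
    u ∘ₗ (TensorProduct.rid ℂ X₁).toLinearMap =
      (TensorProduct.rid ℂ Y₁).toLinearMap ∘ₗ TensorProduct.map u LinearMap.id := by
  apply TensorProduct.ext'; intro x r; simp

omit [AddCommGroup W₁] [Module ℂ W₁]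
  [AddCommGroup Y₂] [Module ℂ Y₂] [AddCommGroup Z₂] [Module ℂ Z₂]
  [AddCommGroup W₂] [Module ℂ W₂] in
lemma mapcomp₁ {X₁ Y₁ Z₁ X₂ : Type} [AddCommMonoid X₁] [Module ℂ X₁]
    [AddCommMonoid Y₁] [Module ℂ Y₁] [AddCommMonoid Z₁] [Module ℂ Z₁]
    [AddCommMonoid X₂] [Module ℂ X₂] {Y₁' : Type} [AddCommMonoid Y₁'] [Module ℂ Y₁']
    (f₂ : Z₁ →ₗ[ℂ] X₂) (f₁ : X₁ →ₗ[ℂ] Z₁) (g : Y₁ →ₗ[ℂ] Y₁') :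
    TensorProduct.map (f₂ ∘ₗ f₁) g =
      TensorProduct.map f₂ g ∘ₗ TensorProduct.map f₁ LinearMap.id := by
  rw [← TensorProduct.map_comp, LinearMap.comp_id]

omit [AddCommGroup W₁] [Module ℂ W₁]
  [AddCommGroup X₂] [Module ℂ X₂] [AddCommGroup Z₂] [Module ℂ Z₂]
  [AddCommGroup W₂] [Module ℂ W₂] in
lemma mapcomp₂ {Y₁' : Type} [AddCommGroup Y₁'] [Module ℂ Y₁']
    (f : X₁ →ₗ[ℂ] Z₁) (g₂ : Y₂ →ₗ[ℂ] Y₁') (g₁ : Y₁ →ₗ[ℂ] Y₂) :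
    TensorProduct.map f (g₂ ∘ₗ g₁) =
      TensorProduct.map f g₂ ∘ₗ TensorProduct.map LinearMap.id g₁ := by
  rw [← TensorProduct.map_comp, LinearMap.comp_id]

end MapHelpers

section Structural

lemma ps1 :
    TensorProduct.map LinearMap.id (tensorTensorTensorComm ℂ A A A A).toLinearMap ∘ₗ
      (tensorTensorTensorComm ℂ M (A ⊗[ℂ] A) H (A ⊗[ℂ] A)).toLinearMap ∘ₗ
      TensorProduct.map (TensorProduct.assoc ℂ M A A).toLinearMap
        (TensorProduct.assoc ℂ H A A).toLinearMap =
    (TensorProduct.assoc ℂ (M ⊗[ℂ] H) (A ⊗[ℂ] A) (A ⊗[ℂ] A)).toLinearMap ∘ₗ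
      TensorProduct.map (tensorTensorTensorComm ℂ M A H A).toLinearMap LinearMap.id ∘ₗ
      (tensorTensorTensorComm ℂ (M ⊗[ℂ] A) A (H ⊗[ℂ] A) A).toLinearMap := by
  apply TensorProduct.ext_fourfold'
  intro x a y b
  induction x using TensorProduct.induction_on with
  | zero => simp
  | tmul m a' =>
    induction y using TensorProduct.induction_on with
    | zero => simp
    | tmul h b' => simp
    | add y₁ y₂ h₁ h₂ =>
      simp only [tmul_add, add_tmul, map_add] at h₁ h₂ ⊢
      rw [h₁, h₂]
  | add x₁ x₂ h₁ h₂ =>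
    simp only [tmul_add, add_tmul, map_add] at h₁ h₂ ⊢
    rw [h₁, h₂]

variable {P C' X : Type} [AddCommGroup P] [Module ℂ P] [AddCommGroup C'] [Module ℂ C']
  [AddCommGroup X] [Module ℂ X]

lemma ps4 (f : P →ₗ[ℂ] X) (g : C' →ₗ[ℂ] A) (s : C' →ₗ[ℂ] ℂ) :
    (TensorProduct.rid ℂ (X ⊗[ℂ] A)).toLinearMap ∘ₗ
      TensorProduct.map (TensorProduct.map f g) s =
    TensorProduct.map f (LinearMap.mul' ℂ A ∘ₗ TensorProduct.map g (toA A s)) ∘ₗ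
      (TensorProduct.assoc ℂ P C' C').toLinearMap := by
  apply TensorProduct.ext_threefold
  intro p c₁ c₂
  simp only [toA, LinearMap.comp_apply, LinearEquiv.coe_coe, TensorProduct.map_tmul,
    TensorProduct.rid_tmul, TensorProduct.assoc_tmul, LinearMap.mul'_apply,
    Algebra.linearMap_apply]
  rw [← Algebra.commutes, ← Algebra.smul_def, tmul_smul]

lemma ps2 (f : P →ₗ[ℂ] X) (s : C' →ₗ[ℂ] ℂ) (g : C' →ₗ[ℂ] A) :
    TensorProduct.map ((TensorProduct.rid ℂ X).toLinearMap ∘ₗ TensorProduct.map f s) g =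
    TensorProduct.map f (LinearMap.mul' ℂ A ∘ₗ TensorProduct.map (toA A s) g) ∘ₗ
      (TensorProduct.assoc ℂ P C' C').toLinearMap := by
  apply TensorProduct.ext_threefold
  intro p c₁ c₂
  simp only [toA, LinearMap.comp_apply, LinearEquiv.coe_coe, TensorProduct.map_tmul,
    TensorProduct.rid_tmul, TensorProduct.assoc_tmul, LinearMap.mul'_apply,
    Algebra.linearMap_apply]
  rw [← Algebra.smul_def, smul_tmul]

end Structural

section Main

variable (V : H →ₗ[ℂ] H ⊗[ℂ] A) (adV : M →ₗ[ℂ] M ⊗[ℂ] A) (θ : M →ₐ[ℂ] Module.End ℂ H)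

lemma cov_map (hcov : IsCovariant A H M V adV θ) :
    comb A H M θ ∘ₗ TensorProduct.map adV V = V ∘ₗ actB H M θ := by
  apply TensorProduct.ext'
  intro a ξ
  simpa [actB] using hcov a ξ

lemma beta_coassoc (hV : IsCoaction A V) (hadV : IsCoaction A adV) (x : M ⊗[ℂ] H) :
    TensorProduct.map LinearMap.id (Coalgebra.comul (R := ℂ) (A := A ⊗[ℂ] A))
      (tensorTensorTensorComm ℂ M A H A (TensorProduct.map adV V x)) =
    TensorProduct.assoc ℂ (M ⊗[ℂ] H) (A ⊗[ℂ] A) (A ⊗[ℂ] A)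
      (TensorProduct.map ((tensorTensorTensorComm ℂ M A H A).toLinearMap ∘ₗ
          TensorProduct.map adV V) LinearMap.id
        (tensorTensorTensorComm ℂ M A H A (TensorProduct.map adV V x))) := by
  set u := TensorProduct.map adV V x with hu
  set z := TensorProduct.map (TensorProduct.map adV LinearMap.id)
      (TensorProduct.map V LinearMap.id) u with hz
  have hΔC : (Coalgebra.comul (R := ℂ) (A := A ⊗[ℂ] A)) =
      (tensorTensorTensorComm ℂ A A A A).toLinearMap ∘ₗ
        TensorProduct.map Coalgebra.comul Coalgebra.comul := rfl
  -- LHS chain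
  have s1 : TensorProduct.map (LinearMap.id (R := ℂ) (M := M ⊗[ℂ] H))
        (Coalgebra.comul (R := ℂ) (A := A ⊗[ℂ] A)) (tensorTensorTensorComm ℂ M A H A u) =
      TensorProduct.map LinearMap.id (tensorTensorTensorComm ℂ A A A A).toLinearMap
        (tensorTensorTensorComm ℂ M (A ⊗[ℂ] A) H (A ⊗[ℂ] A)
          (TensorProduct.map (TensorProduct.map LinearMap.id Coalgebra.comul)
            (TensorProduct.map LinearMap.id Coalgebra.comul) u)) := by
    rw [hΔC, mapcomp₂ LinearMap.id (tensorTensorTensorComm ℂ A A A A).toLinearMap]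
    have hn := LinearMap.congr_fun
      (ttt_nat (LinearMap.id (R := ℂ) (M := M)) (Coalgebra.comul (R := ℂ) (A := A))
        (LinearMap.id (R := ℂ) (M := H)) (Coalgebra.comul (R := ℂ) (A := A))) u
    simp only [LinearMap.comp_apply, LinearEquiv.coe_coe, TensorProduct.map_id] at hn ⊢
    rw [hn]
  have s2 : TensorProduct.map (TensorProduct.map LinearMap.id Coalgebra.comul)
        (TensorProduct.map LinearMap.id Coalgebra.comul) u =
      TensorProduct.map (TensorProduct.assoc ℂ M A A).toLinearMap
        (TensorProduct.assoc ℂ H A A).toLinearMap z := by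
    rw [hu, hz]
    have e1 := LinearMap.congr_fun (TensorProduct.map_comp
      (TensorProduct.map LinearMap.id (Coalgebra.comul (R := ℂ) (A := A)))
      (TensorProduct.map LinearMap.id (Coalgebra.comul (R := ℂ) (A := A))) adV V) x
    simp only [LinearMap.comp_apply] at e1
    rw [← e1, hadV.1, hV.1]
    have e2 := LinearMap.congr_fun (TensorProduct.map_comp
      (TensorProduct.assoc ℂ M A A).toLinearMap
      (TensorProduct.assoc ℂ H A A).toLinearMap
      (TensorProduct.map adV LinearMap.id ∘ₗ adV)
      (TensorProduct.map V LinearMap.id ∘ₗ V)) x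
    simp only [LinearMap.comp_apply] at e2 ⊢
    rw [e2]
    congr 1
    have e3 := LinearMap.congr_fun (TensorProduct.map_comp
      (TensorProduct.map adV LinearMap.id)
      (TensorProduct.map V LinearMap.id) adV V) x
    simp only [LinearMap.comp_apply] at e3
    rw [e3]
  -- RHS chain
  have s3 : TensorProduct.map ((tensorTensorTensorComm ℂ M A H A).toLinearMap ∘ₗ
        TensorProduct.map adV V) LinearMap.id (tensorTensorTensorComm ℂ M A H A u) =
      TensorProduct.map (tensorTensorTensorComm ℂ M A H A).toLinearMap LinearMap.id
        (tensorTensorTensorComm ℂ (M ⊗[ℂ] A) A (H ⊗[ℂ] A) A z) := by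
    rw [mapcomp₁]
    have hn := LinearMap.congr_fun (ttt_nat adV (LinearMap.id (R := ℂ) (M := A)) V
      (LinearMap.id (R := ℂ) (M := A))) u
    simp only [LinearMap.comp_apply, LinearEquiv.coe_coe, TensorProduct.map_id] at hn ⊢
    rw [hn, hz]
  rw [s1, s2, s3]
  have := LinearMap.congr_fun (ps1 A H M) z
  simp only [LinearMap.comp_apply, LinearEquiv.coe_coe] at this
  rw [this]

end Main

section Final

variable (V : H →ₗ[ℂ] H ⊗[ℂ] A) (adV : M →ₗ[ℂ] M ⊗[ℂ] A) (θ : M →ₐ[ℂ] Module.End ℂ H)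
variable (σ σinv : A ⊗[ℂ] A →ₗ[ℂ] ℂ)

lemma Vrho (hcov : IsCovariant A H M V adV θ) (x : M ⊗[ℂ] H) :
    V (rhoBil A H M V adV θ σinv x) =
    TensorProduct.rid ℂ (H ⊗[ℂ] A)
      (TensorProduct.map (comb A H M θ) σinv
        (TensorProduct.map (TensorProduct.map adV V) LinearMap.id
          (tensorTensorTensorComm ℂ M A H A (TensorProduct.map adV V x)))) := by
  have h0 : rhoBil A H M V adV θ σinv x =
      TensorProduct.rid ℂ H (TensorProduct.map (actB H M θ) σinv
        (tensorTensorTensorComm ℂ M A H A (TensorProduct.map adV V x))) := by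
    simp only [rhoBil, combσ, LinearMap.comp_apply, LinearEquiv.coe_coe]
  rw [h0]
  have h1 := LinearMap.congr_fun (rid_nat (X₁ := H) (Y₁ := H ⊗[ℂ] A) V)
    (TensorProduct.map (actB H M θ) σinv
      (tensorTensorTensorComm ℂ M A H A (TensorProduct.map adV V x)))
  simp only [LinearMap.comp_apply, LinearEquiv.coe_coe] at h1
  rw [h1]
  congr 1
  have h3 := LinearMap.congr_fun (TensorProduct.map_comp V
    (LinearMap.id (R := ℂ) (M := ℂ)) (actB H M θ) σinv)
    (tensorTensorTensorComm ℂ M A H A (TensorProduct.map adV V x))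
  simp only [LinearMap.comp_apply, LinearMap.id_comp] at h3
  rw [← h3, ← cov_map A H M V adV θ hcov]
  have h4 := LinearMap.congr_fun (TensorProduct.map_comp (comb A H M θ)
    σinv (TensorProduct.map adV V) (LinearMap.id (R := ℂ) (M := A ⊗[ℂ] A)))
    (tensorTensorTensorComm ℂ M A H A (TensorProduct.map adV V x))
  simp only [LinearMap.comp_apply, LinearMap.comp_id] at h4
  exact h4

lemma part1_pt (hcov : IsCovariant A H M V adV θ) (a : M) (ξ : H) :
    V (rhoσ A H M V adV θ σinv a ξ) =
      Θmap A H M θ σinv (coact₂ A adV a ⊗ₜ coact₂ A V ξ) := by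
  have h0 : rhoσ A H M V adV θ σinv a ξ = rhoBil A H M V adV θ σinv (a ⊗ₜ ξ) := rfl
  rw [h0, Vrho A H M V adV θ σinv hcov]
  have hmx : TensorProduct.map adV V (a ⊗ₜ[ℂ] ξ) = adV a ⊗ₜ V ξ := by simp
  rw [hmx]
  have hn := LinearMap.congr_fun (ttt_nat adV (LinearMap.id (R := ℂ) (M := A)) V
    (LinearMap.id (R := ℂ) (M := A))) (adV a ⊗ₜ V ξ)
  simp only [LinearMap.comp_apply, LinearEquiv.coe_coe, TensorProduct.map_id] at hn
  rw [hn]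
  simp only [Θmap, LinearMap.comp_apply, LinearEquiv.coe_coe, TensorProduct.map_tmul]
  rfl

lemma keyconv (hinv2 : conv σinv σ = (Coalgebra.counit : A ⊗[ℂ] A →ₗ[ℂ] ℂ)) :
    conv (toA A σinv) (mulTwOf A (LinearMap.mul' ℂ A) σ σinv) =
      conv (LinearMap.mul' ℂ A) (toA A σinv) := by
  rw [mulTwOf, ← conv_assoc, toA_conv, hinv2]
  simp only [toA]
  exact conv_one_left _

lemma lhs2 (hV : IsCoaction A V) (hadV : IsCoaction A adV)
    (hcov : IsCovariant A H M V adV θ) (x : M ⊗[ℂ] H) :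
    V (rhoBil A H M V adV θ σinv x) =
      TensorProduct.map (actB H M θ) (conv (LinearMap.mul' ℂ A) (toA A σinv))
        (tensorTensorTensorComm ℂ M A H A (TensorProduct.map adV V x)) := by
  rw [Vrho A H M V adV θ σinv hcov]
  set w := tensorTensorTensorComm ℂ M A H A (TensorProduct.map adV V x) with hw
  -- comb = map actB mul' ∘ ttt
  have hcomb : comb A H M θ = TensorProduct.map (actB H M θ) (LinearMap.mul' ℂ A) ∘ₗ
      (tensorTensorTensorComm ℂ M A H A).toLinearMap := rfl
  have h1 := LinearMap.congr_fun (mapcomp₁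
    (TensorProduct.map (actB H M θ) (LinearMap.mul' ℂ A))
    (tensorTensorTensorComm ℂ M A H A).toLinearMap σinv)
    (TensorProduct.map (TensorProduct.map adV V) LinearMap.id w)
  rw [hcomb, h1]
  simp only [LinearMap.comp_apply]
  have h2 := LinearMap.congr_fun (mapcomp₁ (tensorTensorTensorComm ℂ M A H A).toLinearMap
    (TensorProduct.map adV V) (LinearMap.id (R := ℂ) (M := A ⊗[ℂ] A))).symm w
  simp only [LinearMap.comp_apply] at h2
  rw [h2]
  have h3 := LinearMap.congr_fun (ps4 A (actB H M θ) (LinearMap.mul' ℂ A) σinv)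
    (TensorProduct.map ((tensorTensorTensorComm ℂ M A H A).toLinearMap ∘ₗ
      TensorProduct.map adV V) LinearMap.id w)
  simp only [LinearMap.comp_apply, LinearEquiv.coe_coe] at h3
  rw [h3]
  rw [hw, ← beta_coassoc A H M V adV hV hadV x]
  have h5 := LinearMap.congr_fun (mapcomp₂ (actB H M θ)
    (LinearMap.mul' ℂ A ∘ₗ TensorProduct.map (LinearMap.mul' ℂ A) (toA A σinv))
    (Coalgebra.comul (R := ℂ) (A := A ⊗[ℂ] A))).symm
    (tensorTensorTensorComm ℂ M A H A (TensorProduct.map adV V x))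
  simp only [LinearMap.comp_apply] at h5
  rw [h5]
  simp only [conv, LinearMap.comp_assoc]

lemma rhs2 (hV : IsCoaction A V) (hadV : IsCoaction A adV) (x : M ⊗[ℂ] H) :
    Θ'map A H M V adV θ σ σinv (TensorProduct.map adV V x) =
      TensorProduct.map (actB H M θ)
        (conv (toA A σinv) (mulTwOf A (LinearMap.mul' ℂ A) σ σinv))
        (tensorTensorTensorComm ℂ M A H A (TensorProduct.map adV V x)) := by
  set w := tensorTensorTensorComm ℂ M A H A (TensorProduct.map adV V x) with hw
  have h0 : Θ'map A H M V adV θ σ σinv (TensorProduct.map adV V x) =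
      TensorProduct.map (rhoBil A H M V adV θ σinv)
        (mulTwOf A (LinearMap.mul' ℂ A) σ σinv) w := by
    simp only [Θ'map, LinearMap.comp_apply, LinearEquiv.coe_coe, hw]
  rw [h0]
  have hrho : rhoBil A H M V adV θ σinv =
      ((TensorProduct.rid ℂ H).toLinearMap ∘ₗ TensorProduct.map (actB H M θ) σinv) ∘ₗ
        ((tensorTensorTensorComm ℂ M A H A).toLinearMap ∘ₗ TensorProduct.map adV V) := by
    simp only [rhoBil, combσ, LinearMap.comp_assoc]
  rw [hrho]
  have h1 := LinearMap.congr_fun (mapcomp₁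
    ((TensorProduct.rid ℂ H).toLinearMap ∘ₗ TensorProduct.map (actB H M θ) σinv)
    ((tensorTensorTensorComm ℂ M A H A).toLinearMap ∘ₗ TensorProduct.map adV V)
    (mulTwOf A (LinearMap.mul' ℂ A) σ σinv)) w
  simp only [LinearMap.comp_apply] at h1
  rw [h1]
  have h2 := LinearMap.congr_fun (ps2 A (actB H M θ) σinv
    (mulTwOf A (LinearMap.mul' ℂ A) σ σinv))
    (TensorProduct.map ((tensorTensorTensorComm ℂ M A H A).toLinearMap ∘ₗ
      TensorProduct.map adV V) LinearMap.id w)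
  simp only [LinearMap.comp_apply, LinearEquiv.coe_coe] at h2
  rw [h2]
  rw [hw, ← beta_coassoc A H M V adV hV hadV x]
  have h5 := LinearMap.congr_fun (mapcomp₂ (actB H M θ)
    (LinearMap.mul' ℂ A ∘ₗ TensorProduct.map (toA A σinv)
      (mulTwOf A (LinearMap.mul' ℂ A) σ σinv))
    (Coalgebra.comul (R := ℂ) (A := A ⊗[ℂ] A))).symm
    (tensorTensorTensorComm ℂ M A H A (TensorProduct.map adV V x))
  simp only [LinearMap.comp_apply] at h5
  rw [h5]
  simp only [conv, LinearMap.comp_assoc]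

end Final
/-- covariance of the twisted coaction: for the deformed representation `ρ_σ` one
has `V(ρ_σ(a)ξ) = a₍₀₎ξ₍₀₎ σ⁻¹(a₍₂₎, ξ₍₂₎) ⊗ a₍₁₎ξ₍₁₎`, and this equals
`ρ_σ(a₍₀₎)ξ₍₀₎ ⊗ (a₍₁₎ ·_σ ξ₍₁₎)`. -/
theorem twisted_coaction_covariant
    (V : H →ₗ[ℂ] H ⊗[ℂ] A) (adV : M →ₗ[ℂ] M ⊗[ℂ] A) (θ : M →ₐ[ℂ] Module.End ℂ H)
    (hV : IsCoaction A V) (hadV : IsCoaction A adV)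
    (hadValg : (∀ a b : M, adV (a * b) = adV a * adV b) ∧ adV 1 = 1)
    (hcov : IsCovariant A H M V adV θ)
    (σ σinv : A ⊗[ℂ] A →ₗ[ℂ] ℂ)
    (hcoc : IsCocycle A σ) (hnormσ : IsNormalized A σ) (hnormσinv : IsNormalized A σinv)
    (hinv : AreConvInverse A σ σinv) :
    ∀ (a : M) (ξ : H),
      V (rhoσ A H M V adV θ σinv a ξ) =
        Θmap A H M θ σinv (coact₂ A adV a ⊗ₜ coact₂ A V ξ) ∧
      V (rhoσ A H M V adV θ σinv a ξ) =
        Θ'map A H M V adV θ σ σinv (adV a ⊗ₜ V ξ) := by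
  intro a ξ
  constructor
  · exact part1_pt A H M V adV θ σinv hcov a ξ
  · have hmx : TensorProduct.map adV V (a ⊗ₜ[ℂ] ξ) = adV a ⊗ₜ V ξ := by simp
    have h0 : rhoσ A H M V adV θ σinv a ξ = rhoBil A H M V adV θ σinv (a ⊗ₜ ξ) := rfl
    rw [h0, lhs2 A H M V adV θ σinv hV hadV hcov (a ⊗ₜ ξ), ← hmx,
      rhs2 A H M V adV θ σ σinv hV hadV (a ⊗ₜ ξ), keyconv A σ σinv hinv.2]

end CocycleTwist
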